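/- Let a₁ ≤ b₁ ≤ a₂ ≤ b₂ be real numbers with a₁ < a₂ and b₁ < b₂, let μ, ν be the uniform probability measures on [a₁,a₂] and [b₁,b₂], and define the mutual energy E(μ,ν) := ∫∫ max(x,y) dμ dν − ½∫∫ max dμ dμ − ½∫∫ max dν dν. With ℓ_a = a₂−a₁, ℓ_b = b₂−b₁ and overlap length ℓ_{ab} = a₂−b₁ ≥ 0, one has E(μ,ν) = ℓ_a/6 + ℓ_b/6 − ℓ_{ab}/2 + ℓ_{ab}³/(6·ℓ_a·ℓ_b). -/

import Mathlib

open MeasureTheory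

/-- The uniform probability measure on the interval `[r, s]`. -/
noncomputable def unifIcc (r s : ℝ) : Measure ℝ :=
  (ENNReal.ofReal (s - r))⁻¹ • (volume.restrict (Set.Icc r s))

/-- The mutual energy of two measures on `ℝ` with respect to the kernel `max x y`. -/
noncomputable def mutualE (μ ν : Measure ℝ) : ℝ :=
  (∫ x, ∫ y, max x y ∂ν ∂μ)
    - (1/2) * (∫ x, ∫ y, max x y ∂μ ∂μ)
    - (1/2) * (∫ x, ∫ y, max x y ∂ν ∂ν)

lemma integral_unifIcc (r s : ℝ) (hrs : r < s) (f : ℝ → ℝ) :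
    ∫ y, f y ∂(unifIcc r s) = (s - r)⁻¹ * ∫ y in r..s, f y := by
  rw [unifIcc, integral_smul_measure, ENNReal.toReal_inv,
    ENNReal.toReal_ofReal (by linarith), smul_eq_mul,
    MeasureTheory.integral_Icc_eq_integral_Ioc, intervalIntegral.integral_of_le hrs.le]

lemma intervalIntegrable_of_eqOn {f h : ℝ → ℝ} {a b : ℝ}
    (heq : Set.EqOn h f (Set.uIcc a b)) (hh : IntervalIntegrable h volume a b) :
    IntervalIntegrable f volume a b :=
  hh.congr_ae <| (ae_restrict_mem measurableSet_uIoc).mono fun y hy =>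
    heq (Set.uIoc_subset_uIcc hy)

lemma intMax_le (x r s : ℝ) (hx : x ≤ r) (hrs : r ≤ s) :
    (∫ y in r..s, max x y) = (s^2 - r^2)/2 := by
  rw [intervalIntegral.integral_congr (g := fun y => y)
    (fun y hy => max_eq_right (le_trans hx ((Set.uIcc_of_le hrs ▸ hy).1)))]
  exact integral_id

lemma intMax_mem (x r s : ℝ) (hr : r ≤ x) (hs : x ≤ s) :
    (∫ y in r..s, max x y) = x*(x-r) + (s^2 - x^2)/2 := by
  have int1 : IntervalIntegrable (fun y => max x y) volume r x :=
    (continuous_const.max continuous_id).intervalIntegrable _ _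
  have int2 : IntervalIntegrable (fun y => max x y) volume x s :=
    (continuous_const.max continuous_id).intervalIntegrable _ _
  rw [← intervalIntegral.integral_add_adjacent_intervals int1 int2]
  have e1 : (∫ y in r..x, max x y) = x*(x-r) := by
    rw [intervalIntegral.integral_congr (g := fun _ => x)
      (fun y hy => max_eq_left ((Set.uIcc_of_le hr ▸ hy).2))]
    simp only [intervalIntegral.integral_const, smul_eq_mul]
    ring
  have e2 : (∫ y in x..s, max x y) = (s^2 - x^2)/2 := by
    rw [intervalIntegral.integral_congr (g := fun y => y)
      (fun y hy => max_eq_right ((Set.uIcc_of_le hs ▸ hy).1))]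
    exact integral_id
  rw [e1, e2]

lemma poly_int (a b c d : ℝ) :
    (∫ x in a..b, (x*(x-c) + (d^2 - x^2)/2)) =
      (b^3 - a^3)/6 - c*(b^2 - a^2)/2 + d^2*(b - a)/2 := by
  have key : ∀ x ∈ Set.uIcc a b,
      HasDerivAt (fun x => x^3/6 - c*x^2/2 + d^2*x/2) (x*(x-c) + (d^2 - x^2)/2) x := by
    intro x _
    have h : HasDerivAt (fun x : ℝ => x^3/6 - c*x^2/2 + d^2*x/2)
        ((3:ℕ) * x^2 / 6 - c * ((2:ℕ) * x^1) / 2 + d^2 * 1 / 2) x := by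
      exact (((hasDerivAt_pow 3 x).div_const 6).sub
        (((hasDerivAt_pow 2 x).const_mul c).div_const 2)).add
        (((hasDerivAt_id x).const_mul (d^2)).div_const 2)
    convert h using 1
    push_cast
    ring
  rw [intervalIntegral.integral_eq_sub_of_hasDerivAt key
    (((continuous_id.mul (by continuity)).add (by continuity)).intervalIntegrable _ _)]
  ring

lemma inner_le (x r s : ℝ) (hx : x ≤ r) (hrs : r < s) :
    ∫ y, max x y ∂(unifIcc r s) = (r + s)/2 := by
  rw [integral_unifIcc r s hrs, intMax_le x r s hx hrs.le]
  have h : s - r ≠ 0 := by linarith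
  field_simp
  ring

lemma inner_mem (x r s : ℝ) (hr : r ≤ x) (hs : x ≤ s) (hrs : r < s) :
    ∫ y, max x y ∂(unifIcc r s) = (s - r)⁻¹ * (x*(x-r) + (s^2 - x^2)/2) := by
  rw [integral_unifIcc r s hrs, intMax_mem x r s hr hs]

lemma self_energy (r s : ℝ) (hrs : r < s) :
    (∫ x, ∫ y, max x y ∂(unifIcc r s) ∂(unifIcc r s)) = (r + s)/2 + (s - r)/6 := by
  rw [integral_unifIcc r s hrs]
  have hcong : Set.EqOn (fun x => (s - r)⁻¹ * (x*(x-r) + (s^2 - x^2)/2))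
      (fun x => ∫ y, max x y ∂(unifIcc r s)) (Set.uIcc r s) := by
    intro x hx
    rw [Set.uIcc_of_le hrs.le] at hx
    exact (inner_mem x r s hx.1 hx.2 hrs).symm
  rw [← intervalIntegral.integral_congr hcong, intervalIntegral.integral_const_mul,
    poly_int r s r s]
  have h : s - r ≠ 0 := by linarith
  field_simp
  ring

lemma mutual_int (a₁ b₁ a₂ b₂ : ℝ) (h₁ : a₁ ≤ b₁) (h₂ : b₁ ≤ a₂) (h₃ : a₂ ≤ b₂)
    (ha : a₁ < a₂) (hb : b₁ < b₂) :
    (∫ x, ∫ y, max x y ∂(unifIcc b₁ b₂) ∂(unifIcc a₁ a₂)) =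
      (a₂ - a₁)⁻¹ * ((b₁ + b₂)/2 * (b₁ - a₁)
        + (b₂ - b₁)⁻¹ * ((a₂^3 - b₁^3)/6 - b₁*(a₂^2 - b₁^2)/2 + b₂^2*(a₂ - b₁)/2)) := by
  rw [integral_unifIcc a₁ a₂ ha]
  congr 1
  -- split at b₁
  have e1 : (∫ x in a₁..b₁, ∫ y, max x y ∂(unifIcc b₁ b₂)) = (b₁ + b₂)/2 * (b₁ - a₁) := by
    rw [intervalIntegral.integral_congr (g := fun _ => (b₁ + b₂)/2)
      (fun x hx => inner_le x b₁ b₂ ((Set.uIcc_of_le h₁ ▸ hx).2) hb)]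
    simp only [intervalIntegral.integral_const, smul_eq_mul]
    ring
  have e2 : (∫ x in b₁..a₂, ∫ y, max x y ∂(unifIcc b₁ b₂)) =
      (b₂ - b₁)⁻¹ * ((a₂^3 - b₁^3)/6 - b₁*(a₂^2 - b₁^2)/2 + b₂^2*(a₂ - b₁)/2) := by
    have hcong : Set.EqOn (fun x => (b₂ - b₁)⁻¹ * (x*(x-b₁) + (b₂^2 - x^2)/2))
        (fun x => ∫ y, max x y ∂(unifIcc b₁ b₂)) (Set.uIcc b₁ a₂) := by
      intro x hx
      rw [Set.uIcc_of_le h₂] at hx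
      exact (inner_mem x b₁ b₂ hx.1 (le_trans hx.2 h₃) hb).symm
    rw [← intervalIntegral.integral_congr hcong, intervalIntegral.integral_const_mul,
      poly_int b₁ a₂ b₁ b₂]
  have int1 : IntervalIntegrable (fun x => ∫ y, max x y ∂(unifIcc b₁ b₂)) volume a₁ b₁ := by
    refine intervalIntegrable_of_eqOn (h := fun _ => (b₁ + b₂)/2) ?_
      (intervalIntegrable_const)
    exact fun x hx => (inner_le x b₁ b₂ ((Set.uIcc_of_le h₁ ▸ hx).2) hb).symm
  have int2 : IntervalIntegrable (fun x => ∫ y, max x y ∂(unifIcc b₁ b₂)) volume b₁ a₂ := by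
    refine intervalIntegrable_of_eqOn
      (h := fun x => (b₂ - b₁)⁻¹ * (x*(x-b₁) + (b₂^2 - x^2)/2)) ?_
      ((by continuity : Continuous fun x : ℝ => (b₂ - b₁)⁻¹ * (x*(x-b₁) + (b₂^2 - x^2)/2)).intervalIntegrable _ _)
    intro x hx
    rw [Set.uIcc_of_le h₂] at hx
    exact (inner_mem x b₁ b₂ hx.1 (le_trans hx.2 h₃) hb).symm
  rw [← intervalIntegral.integral_add_adjacent_intervals int1 int2, e1, e2]

theorem stmt_11 (a₁ b₁ a₂ b₂ : ℝ) (h₁ : a₁ ≤ b₁) (h₂ : b₁ ≤ a₂) (h₃ : a₂ ≤ b₂)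
    (ha : a₁ < a₂) (hb : b₁ < b₂) :
    mutualE (unifIcc a₁ a₂) (unifIcc b₁ b₂)
      = (a₂ - a₁) / 6 + (b₂ - b₁) / 6 - (a₂ - b₁) / 2
        + (a₂ - b₁) ^ 3 / (6 * (a₂ - a₁) * (b₂ - b₁)) := by
  rw [mutualE, mutual_int a₁ b₁ a₂ b₂ h₁ h₂ h₃ ha hb, self_energy a₁ a₂ ha,
    self_energy b₁ b₂ hb]
  have ha' : a₂ - a₁ ≠ 0 := by linarith
  have hb' : b₂ - b₁ ≠ 0 := by linarith
  field_simp
  ring
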